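/- arXiv:1411.6692 — 2 statements merged into one kernel-verified Lean document; each statement's English description precedes it below -/
import Mathlib

section
/- Let L be a split δ Jordan-Lie algebra with symmetric root system Λ, and let α ∈ Λ. Then the set Λ_α of nonzero roots connected to α is a root subsystem: it is symmetric, and if β, γ ∈ Λ_α with δ(β+γ) ∈ Λ, then δ(β+γ) ∈ Λ_α. -/
/-- A δ Jordan-Lie algebra: a vector space with a bilinear bracket satisfying
`[x,y] = -δ[y,x]` and `[x,[y,z]] = δ[[x,y],z] + δ[y,[x,z]]` with `δ = ±1`. -/
structure DeltaJordanLie (K L : Type*) [Field K] [AddCommGroup L] [Module K L] where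
  br : L →ₗ[K] L →ₗ[K] L
  delta : K
  delta_pm : delta = 1 ∨ delta = -1
  anti : ∀ x y : L, br x y = -(delta • br y x)
  jacobi : ∀ x y z : L, br x (br y z) = delta • br (br x y) z + delta • br y (br x z)

variable {K L : Type*} [Field K] [AddCommGroup L] [Module K L]

/-- The root space `L_α = {v ∈ L : [h,v] = α(h)v for all h ∈ H}`. -/
def DeltaJordanLie.rootSpace (J : DeltaJordanLie K L) (H : Submodule K L)
    (α : Module.Dual K H) : Submodule K L where
  carrier := {v : L | ∀ h : H, J.br (h : L) v = α h • v}
  zero_mem' := by intro h; simp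
  add_mem' := by intro a b ha hb h; simp [ha h, hb h, smul_add]
  smul_mem' := by intro c a ha h; rw [map_smul, ha h, smul_comm]

/-- The root system `Λ = {α ∈ H* \ {0} : L_α ≠ 0}`. -/
def DeltaJordanLie.roots (J : DeltaJordanLie K L) (H : Submodule K L) :
    Set (Module.Dual K H) :=
  {α | α ≠ 0 ∧ J.rootSpace H α ≠ ⊥}

/-- `H` is a splitting Cartan subalgebra: a maximal abelian subalgebra such that
`L` decomposes as the direct sum of the simultaneous eigenspaces `L_α`, with `L_0 = H`. -/
structure DeltaJordanLie.IsSplitting (J : DeltaJordanLie K L) (H : Submodule K L) : Prop where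
  abelian : ∀ x ∈ H, ∀ y ∈ H, J.br x y = 0
  maximal : ∀ H' : Submodule K L, H ≤ H' →
      (∀ x ∈ H', ∀ y ∈ H', J.br x y = 0) → H' = H
  zero_rootSpace : J.rootSpace H 0 = H
  indep : iSupIndep (fun α : Module.Dual K H => J.rootSpace H α)
  decomp : (⨆ α : Module.Dual K H, J.rootSpace H α) = ⊤

/-- The root system is symmetric. -/
def DeltaJordanLie.SymmetricRoots (J : DeltaJordanLie K L) (H : Submodule K L) : Prop :=
  ∀ α ∈ J.roots H, -α ∈ J.roots H

/-- The δ-twisted partial sums of a sequence of roots: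
`s₀ = f 0`, `s_{k+1} = δ • (s_k + f (k+1))`, so that
`s_k = δ^k f 0 + δ^k f 1 + δ^{k-1} f 2 + ⋯ + δ f k`. -/
def connSum {H : Submodule K L} (d : K) (f : ℕ → Module.Dual K H) : ℕ → Module.Dual K H
  | 0 => f 0
  | k + 1 => d • (connSum d f k + f (k + 1))

/-- `f 0, …, f n` is a connection from `α` to `β`: all terms are roots, `f 0 = α`,
all proper δ-twisted partial sums are roots, and the final sum is `±β`. -/
def IsConnection (J : DeltaJordanLie K L) (H : Submodule K L)
    (α β : Module.Dual K H) (n : ℕ) (f : ℕ → Module.Dual K H) : Prop :=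
  (∀ i ≤ n, f i ∈ J.roots H) ∧ f 0 = α ∧
  (∀ k < n, connSum J.delta f k ∈ J.roots H) ∧
  (connSum J.delta f n = β ∨ connSum J.delta f n = -β)

/-- `α` and `β` are connected. -/
def Connected (J : DeltaJordanLie K L) (H : Submodule K L)
    (α β : Module.Dual K H) : Prop :=
  ∃ n f, IsConnection J H α β n f

/-- `Λ_α`: the set of nonzero roots connected to `α`. -/
def connectedRoots (J : DeltaJordanLie K L) (H : Submodule K L)
    (α : Module.Dual K H) : Set (Module.Dual K H) :=
  {β ∈ J.roots H | Connected J H α β}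

/-- An ideal of a δ Jordan-Lie algebra: a submodule with `[I,L] ⊆ I` and `[L,I] ⊆ I`. -/
def IsIdeal (J : DeltaJordanLie K L) (I : Submodule K L) : Prop :=
  ∀ x ∈ I, ∀ y : L, J.br x y ∈ I ∧ J.br y x ∈ I

/-- `H_S = span{[L_β, L_{-β}] : β ∈ S}`. -/
def rootSpan (J : DeltaJordanLie K L) (H : Submodule K L)
    (S : Set (Module.Dual K H)) : Submodule K L :=
  Submodule.span K {z : L | ∃ β ∈ S, ∃ x ∈ J.rootSpace H β, ∃ y ∈ J.rootSpace H (-β),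
    z = J.br x y}

/-- `L_S = H_S ⊕ V_S`, the subalgebra associated to a set of roots `S`. -/
def decIdeal (J : DeltaJordanLie K L) (H : Submodule K L)
    (S : Set (Module.Dual K H)) : Submodule K L :=
  rootSpan J H S ⊔ ⨆ β ∈ S, J.rootSpace H β

lemma connSum_congr {H : Submodule K L} (d : K) {f g : ℕ → Module.Dual K H}
    (k : ℕ) (h : ∀ i ≤ k, f i = g i) : connSum d f k = connSum d g k := by
  induction k with
  | zero => exact h 0 le_rfl
  | succ k ih =>
    simp only [connSum, ih (fun i hi => h i (hi.trans (Nat.le_succ k))), h (k+1) le_rfl]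

lemma extend_conn (J : DeltaJordanLie K L) (H : Submodule K L)
    {α β γ : Module.Dual K H} (hβ : β ∈ J.roots H) (hγ : γ ∈ J.roots H)
    {n : ℕ} {f : ℕ → Module.Dual K H} (hf1 : ∀ i ≤ n, f i ∈ J.roots H)
    (hf2 : f 0 = α) (hf3 : ∀ k < n, connSum J.delta f k ∈ J.roots H)
    (hf4 : connSum J.delta f n = β) :
    ∃ m g, IsConnection J H α (J.delta • (β + γ)) m g ∧
      connSum J.delta g m = J.delta • (β + γ) := by
  refine ⟨n + 1, fun i => if i ≤ n then f i else γ, ⟨?_, ?_, ?_, ?_⟩, ?_⟩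
  · intro i hi
    by_cases h : i ≤ n
    · simpa [h] using hf1 i h
    · simpa [h] using hγ
  · simpa using hf2
  · intro k hk
    have hcong : connSum J.delta f k =
        connSum J.delta (fun i => if i ≤ n then f i else γ) k := by
      apply connSum_congr
      intro i hi
      have : i ≤ n := hi.trans (Nat.lt_succ_iff.mp hk)
      simp [this]
    rw [← hcong]
    rcases Nat.lt_succ_iff_lt_or_eq.mp hk with h | h
    · exact hf3 k h
    · rw [h, hf4]; exact hβ
  all_goals {
    have hcong : connSum J.delta f n =
        connSum J.delta (fun i => if i ≤ n then f i else γ) n := by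
      apply connSum_congr; intro i hi; simp [hi]
    have : connSum J.delta (fun i => if i ≤ n then f i else γ) (n + 1)
        = J.delta • (β + γ) := by
      simp only [connSum, ← hcong, hf4]
      simp
    first | exact Or.inl this | exact this }

/-- `Λ_α` is a root subsystem: symmetric and closed under
`(β,γ) ↦ δ(β+γ)` whenever `δ(β+γ) ∈ Λ`. -/
theorem stmt4 (J : DeltaJordanLie K L) (H : Submodule K L) (hs : J.IsSplitting H)
    (hsym : J.SymmetricRoots H) (α : Module.Dual K H) (hα : α ∈ J.roots H) :
    (∀ β ∈ connectedRoots J H α, -β ∈ connectedRoots J H α) ∧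
    (∀ β ∈ connectedRoots J H α, ∀ γ ∈ connectedRoots J H α,
      J.delta • (β + γ) ∈ J.roots H → J.delta • (β + γ) ∈ connectedRoots J H α) := by
  constructor
  · rintro β ⟨hβ, n, f, h1, h2, h3, h4⟩
    refine ⟨hsym β hβ, n, f, h1, h2, h3, ?_⟩
    rcases h4 with h | h
    · right; rw [h, neg_neg]
    · left; exact h
  · rintro β ⟨hβ, n, f, hf1, hf2, hf3, hf4⟩ γ ⟨hγ, -⟩ hδ
    refine ⟨hδ, ?_⟩
    rcases hf4 with h | h
    · obtain ⟨m, g, hg, -⟩ := extend_conn J H hβ hγ hf1 hf2 hf3 h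
      exact ⟨m, g, hg⟩
    · obtain ⟨m, g, ⟨hg1, hg2, hg3, -⟩, hg5⟩ :=
        extend_conn J H (hsym β hβ) (hsym γ hγ) hf1 hf2 hf3 h
      refine ⟨m, g, hg1, hg2, hg3, Or.inr ?_⟩
      rw [hg5]
      rw [show -β + -γ = -(β + γ) from (neg_add β γ).symm]
      exact smul_neg _ _
end

section
/- Let L be a split δ Jordan-Lie algebra with symmetric root system Λ, α ∈ Λ, and γ ∈ Λ with γ ∉ Λ_α. Then γ([L_β, L_{-β}]) = 0 for every β ∈ Λ_α, i.e., γ vanishes on the span of the brackets [L_β, L_{-β}] for β connected to α. -/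
variable {K L : Type*} [Field K] [AddCommGroup L] [Module K L]

private theorem connSum_congr_aux {H : Submodule K L} (d : K) (f g : ℕ → Module.Dual K H)
    (k : ℕ) (h : ∀ i ≤ k, f i = g i) : connSum d f k = connSum d g k := by
  induction k with
  | zero => simp [connSum, h 0 (le_refl 0)]
  | succ n ih =>
    simp only [connSum]
    rw [ih (fun i hi => h i (hi.trans (Nat.le_succ n))), h (n+1) le_rfl]

private theorem br_rootSpace_aux (J : DeltaJordanLie K L) (H : Submodule K L)
    (β γ : Module.Dual K H) (x w : L) (hx : x ∈ J.rootSpace H β)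
    (hw : w ∈ J.rootSpace H γ) : J.br x w ∈ J.rootSpace H (J.delta • (β + γ)) := by
  intro h
  rw [J.jacobi (h : L) x w, hx h, hw h]
  simp only [map_smul, LinearMap.smul_apply, LinearMap.add_apply, smul_eq_mul]
  module

private theorem delta_sq_aux (J : DeltaJordanLie K L) : J.delta * J.delta = 1 := by
  rcases J.delta_pm with h | h <;> rw [h] <;> norm_num

private theorem delta_ne_zero_aux (J : DeltaJordanLie K L) : J.delta ≠ 0 := by
  rcases J.delta_pm with h | h <;> rw [h] <;> norm_num

private theorem neg_connected_aux (J : DeltaJordanLie K L) (H : Submodule K L)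
    (hsym : J.SymmetricRoots H) (α β : Module.Dual K H)
    (hβ : β ∈ connectedRoots J H α) : -β ∈ connectedRoots J H α := by
  obtain ⟨hβr, n, f, hf1, hf2, hf3, hf4⟩ := hβ
  exact ⟨hsym β hβr, n, f, hf1, hf2, hf3, by
    rcases hf4 with h | h
    · right; rw [h, neg_neg]
    · left; exact h⟩

private theorem br_zero_aux (J : DeltaJordanLie K L) (H : Submodule K L)
    (hsym : J.SymmetricRoots H) (α β γ : Module.Dual K H)
    (hβ : β ∈ connectedRoots J H α) (hγ : γ ∈ J.roots H)
    (hγn : γ ∉ connectedRoots J H α)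
    (x w : L) (hx : x ∈ J.rootSpace H β) (hw : w ∈ J.rootSpace H γ) :
    J.br x w = 0 := by
  by_contra hne
  have hmem := br_rootSpace_aux J H β γ x w hx hw
  set μ := J.delta • (β + γ) with hμdef
  have hμbot : J.rootSpace H μ ≠ ⊥ := by
    intro hb
    rw [hb, Submodule.mem_bot] at hmem
    exact hne hmem
  have hβr : β ∈ J.roots H := hβ.1
  obtain ⟨n, f, hf1, hf2, hf3, hf4⟩ := hβ.2
  by_cases hμ0 : μ = 0
  · -- then γ = -β, which is connected to α
    have hbg : β + γ = 0 := by
      rcases smul_eq_zero.mp (hμdef ▸ hμ0) with h | h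
      · exact absurd h (delta_ne_zero_aux J)
      · exact h
    have hγβ : γ = -β := by
      rw [eq_neg_iff_add_eq_zero, add_comm]; exact hbg
    exact hγn ⟨hγ, n, f, hf1, hf2, hf3, by
      rcases hf4 with h | h
      · right; rw [h, hγβ, neg_neg]
      · left; rw [h, hγβ]⟩
  · have hμroot : μ ∈ J.roots H := ⟨hμ0, hμbot⟩
    apply hγn
    refine ⟨hγ, ?_⟩
    rcases hf4 with hend | hend
    · -- the connection ends exactly at β : append γ then -(δ•β)
      set g : ℕ → Module.Dual K H :=
        fun i => if i ≤ n then f i else if i = n + 1 then γ else -(J.delta • β) with hg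
      have hgf : ∀ i ≤ n, f i = g i := by
        intro i hi; simp [hg, hi]
      have hcs : ∀ k ≤ n, connSum J.delta g k = connSum J.delta f k := by
        intro k hk
        exact (connSum_congr_aux J.delta f g k (fun i hi => hgf i (hi.trans hk))).symm
      have hgn1 : g (n + 1) = γ := by simp [hg]
      have hgn2 : g (n + 2) = -(J.delta • β) := by
        have h1 : ¬ (n + 2 ≤ n) := by omega
        have h2 : n + 2 ≠ n + 1 := by omega
        simp [hg, h1, h2]
      have hsn1 : connSum J.delta g (n + 1) = μ := by
        show J.delta • (connSum J.delta g n + g (n + 1)) = μ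
        rw [hcs n le_rfl, hend, hgn1]
      refine ⟨n + 2, g, ?_, ?_, ?_, ?_⟩
      · intro i hi
        by_cases h1 : i ≤ n
        · rw [← hgf i h1]; exact hf1 i h1
        · by_cases h2 : i = n + 1
          · rw [h2, hgn1]; exact hγ
          · have h3 : i = n + 2 := by omega
            rw [h3, hgn2]
            rcases J.delta_pm with hd | hd
            · rw [hd, one_smul]; exact hsym β hβr
            · have h2 : -(J.delta • β) = β := by rw [hd]; module
              rw [h2]; exact hβr
      · rw [← hgf 0 (Nat.zero_le n)]; exact hf2
      · intro k hk
        by_cases h1 : k ≤ n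
        · rw [hcs k h1]
          rcases lt_or_eq_of_le h1 with h2 | h2
          · exact hf3 k h2
          · rw [h2, hend]; exact hβr
        · have h2 : k = n + 1 := by omega
          rw [h2, hsn1]; exact hμroot
      · left
        show J.delta • (connSum J.delta g (n + 1) + g (n + 2)) = γ
        rw [hsn1, hgn2, hμdef]
        rw [smul_add, smul_neg, smul_smul, smul_smul, delta_sq_aux J, one_smul, one_smul]
        abel
    · -- the connection ends exactly at -β : append β + γ
      set g : ℕ → Module.Dual K H :=
        fun i => if i ≤ n then f i else β + γ with hg
      have hgf : ∀ i ≤ n, f i = g i := by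
        intro i hi; simp [hg, hi]
      have hcs : ∀ k ≤ n, connSum J.delta g k = connSum J.delta f k := by
        intro k hk
        exact (connSum_congr_aux J.delta f g k (fun i hi => hgf i (hi.trans hk))).symm
      have hgn1 : g (n + 1) = β + γ := by simp [hg]
      have hbgroot : β + γ ∈ J.roots H := by
        rcases J.delta_pm with hd | hd
        · rw [hd, one_smul] at hμdef
          exact hμdef ▸ hμroot
        · have h2 : β + γ = -μ := by rw [hμdef, hd]; module
          rw [h2]; exact hsym μ hμroot
      refine ⟨n + 1, g, ?_, ?_, ?_, ?_⟩
      · intro i hi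
        by_cases h1 : i ≤ n
        · rw [← hgf i h1]; exact hf1 i h1
        · have h2 : i = n + 1 := by omega
          rw [h2, hgn1]; exact hbgroot
      · rw [← hgf 0 (Nat.zero_le n)]; exact hf2
      · intro k hk
        have h1 : k ≤ n := by omega
        rw [hcs k h1]
        rcases lt_or_eq_of_le h1 with h2 | h2
        · exact hf3 k h2
        · rw [h2, hend]; exact hsym β hβr
      · have : connSum J.delta g (n + 1) = J.delta • γ := by
          show J.delta • (connSum J.delta g n + g (n + 1)) = J.delta • γ
          rw [hcs n le_rfl, hend, hgn1]
          congr 1; abel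
        rcases J.delta_pm with hd | hd
        · left; rw [this, hd, one_smul]
        · right; rw [this, hd]; module

/-- if `γ ∈ Λ` is not connected to `α`, then `γ([L_β, L_{-β}]) = 0`
for every `β ∈ Λ_α`. -/
theorem stmt6 (J : DeltaJordanLie K L) (H : Submodule K L) (hs : J.IsSplitting H)
    (hsym : J.SymmetricRoots H) (α γ : Module.Dual K H)
    (hα : α ∈ J.roots H) (hγ : γ ∈ J.roots H) (hγn : γ ∉ connectedRoots J H α) :
    ∀ β ∈ connectedRoots J H α, ∀ x ∈ J.rootSpace H β, ∀ y ∈ J.rootSpace H (-β),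
      ∀ h : H, (h : L) = J.br x y → γ h = 0 := by
  intro β hβ x hx y hy h hh
  obtain ⟨w, hw, hwne⟩ := (Submodule.ne_bot_iff _).mp hγ.2
  have h1 : J.br x w = 0 := br_zero_aux J H hsym α β γ hβ hγ hγn x w hx hw
  have h2 : J.br y w = 0 :=
    br_zero_aux J H hsym α (-β) γ (neg_connected_aux J H hsym α β hβ) hγ hγn y w hy hw
  have hj := J.jacobi x y w
  rw [h1, h2, map_zero, map_zero] at hj
  simp only [smul_zero, add_zero] at hj
  have hbr : J.br (J.br x y) w = 0 := by
    rcases smul_eq_zero.mp hj.symm with hc | hc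
    · exact absurd hc (delta_ne_zero_aux J)
    · exact hc
  have hww := hw h
  rw [hh, hbr] at hww
  rcases smul_eq_zero.mp hww.symm with hc | hc
  · exact hc
  · exact absurd hc hwne
end
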